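/- Let A be an ℕ-graded unital ℂ-algebra satisfying the hypotheses below, H ⊆ Q₀ a subset, and e := Σ_{i∈H} e_i. Assume the quotient of A by the two-sided ideal generated by e is finite-dimensional over ℂ. Then Ae := {x ∈ A : x·e = x} is finitely generated as a right module over the corner algebra eAe := {x ∈ A : e·x·e = x}: there exists a finite subset T ⊆ Ae such that every element of Ae lies in the ℂ-linear span of T ∪ {t·c : t ∈ T, c ∈ eAe}. Symmetrically, eA := {x ∈ A : e·x = x} is finitely generated as a left eAe-module: there exists a finite subset T' ⊆ eA such that every element of eA lies in the ℂ-linear span of T' ∪ {c·t : t ∈ T', c ∈ eAe}. -/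

import Mathlib

noncomputable section

open scoped BigOperators

namespace Stmt8

set_option linter.unusedSectionVars false

open scoped Classical

variable {A : Type} [Ring A] [Algebra ℂ A] (𝒜 : ℕ → Submodule ℂ A) [GradedRing 𝒜]

/-- The degree-`n` projection of a graded ring, as a linear map. -/
def projL (n : ℕ) : A →ₗ[ℂ] A where
  toFun z := ((DirectSum.decompose 𝒜 z) n : A)
  map_add' x y := by
    simp only [DirectSum.decompose_add, DirectSum.add_apply, Submodule.coe_add]
  map_smul' r x := by
    simp only [DirectSum.decompose_smul, DirectSum.smul_apply, SetLike.val_smul,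
      RingHom.id_apply]

lemma projL_of_mem_same {n : ℕ} {x : A} (h : x ∈ 𝒜 n) : projL 𝒜 n x = x :=
  DirectSum.decompose_of_mem_same 𝒜 h

lemma projL_of_mem_ne {m n : ℕ} {x : A} (h : x ∈ 𝒜 m) (hne : m ≠ n) : projL 𝒜 n x = 0 :=
  DirectSum.decompose_of_mem_ne 𝒜 h hne

lemma sum_support_projL (x : A) :
    ∑ k ∈ DFinsupp.support (DirectSum.decompose 𝒜 x), projL 𝒜 k x = x :=
  DirectSum.sum_support_decompose 𝒜 x

lemma projL_mem (n : ℕ) (x : A) : projL 𝒜 n x ∈ 𝒜 n := ((DirectSum.decompose 𝒜 x) n).2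

/-- Products `𝒜 0 * 𝒜 1 * ⋯ * 𝒜 1`. -/
def Bp : ℕ → Submodule ℂ A
  | 0 => 𝒜 0
  | (n+1) => Bp n * 𝒜 1

/-- Products `𝒜 1 * ⋯ * 𝒜 1 * 𝒜 0`. -/
def Bq : ℕ → Submodule ℂ A
  | 0 => 𝒜 0
  | (n+1) => 𝒜 1 * Bq n

lemma Bp_zero : Bp 𝒜 0 = 𝒜 0 := rfl
lemma Bp_succ (n : ℕ) : Bp 𝒜 (n+1) = Bp 𝒜 n * 𝒜 1 := rfl
lemma Bq_zero : Bq 𝒜 0 = 𝒜 0 := rfl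
lemma Bq_succ (n : ℕ) : Bq 𝒜 (n+1) = 𝒜 1 * Bq 𝒜 n := rfl

lemma Bp_le : ∀ n, Bp 𝒜 n ≤ 𝒜 n
  | 0 => le_rfl
  | (n+1) => by
      rw [Bp, Submodule.mul_le]
      intro m hm v hv
      exact SetLike.mul_mem_graded (Bp_le n hm) hv

lemma Bq_le : ∀ n, Bq 𝒜 n ≤ 𝒜 n
  | 0 => le_rfl
  | (n+1) => by
      rw [Bq, Submodule.mul_le]
      intro v hv m hm
      have := SetLike.mul_mem_graded hv (Bq_le n hm)
      rwa [add_comm] at this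

lemma Bp_mul_A0 : ∀ n, Bp 𝒜 n * 𝒜 0 ≤ Bp 𝒜 n
  | 0 => by
      rw [Bp, Submodule.mul_le]
      intro m hm v hv
      simpa using SetLike.mul_mem_graded hm hv
  | (n+1) => by
      rw [Bp, mul_assoc]
      refine mul_le_mul' le_rfl ?_ |>.trans le_rfl
      · rw [Submodule.mul_le]
        intro m hm v hv
        simpa using SetLike.mul_mem_graded hm hv

lemma A0_mul_Bq : ∀ n, 𝒜 0 * Bq 𝒜 n ≤ Bq 𝒜 n
  | 0 => by
      rw [Bq, Submodule.mul_le]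
      intro m hm v hv
      simpa using SetLike.mul_mem_graded hm hv
  | (n+1) => by
      rw [Bq, ← mul_assoc]
      have h01 : (𝒜 0 : Submodule ℂ A) * 𝒜 1 ≤ 𝒜 1 := by
        rw [Submodule.mul_le]
        intro m hm v hv
        simpa using SetLike.mul_mem_graded hm hv
      exact mul_le_mul' h01 le_rfl

lemma Bp_mul_Bp (m : ℕ) : ∀ n, Bp 𝒜 m * Bp 𝒜 n ≤ Bp 𝒜 (m + n)
  | 0 => by simpa [Bp] using Bp_mul_A0 𝒜 m
  | (n+1) => by
      rw [Bp, ← mul_assoc, ← Nat.add_assoc, Bp]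
      exact mul_le_mul' (Bp_mul_Bp m n) le_rfl

lemma Bq_mul_Bq (n : ℕ) : ∀ m, Bq 𝒜 m * Bq 𝒜 n ≤ Bq 𝒜 (m + n)
  | 0 => by simpa [Bq] using A0_mul_Bq 𝒜 n
  | (m+1) => by
      rw [Bq, mul_assoc]
      have : (m + 1) + n = (m + n) + 1 := by omega
      rw [this, Bq]
      exact mul_le_mul' le_rfl (Bq_mul_Bq n m)

lemma projL_gen_mem_right {e : A} (he0 : e ∈ 𝒜 0) (n : ℕ) (a b : A) :
    projL 𝒜 n (a * e * b) ∈
      Submodule.span ℂ {y : A | ∃ p ≤ n, ∃ a' ∈ 𝒜 p, ∃ b' : A, y = a' * e * b'} := by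
  set K := Submodule.span ℂ {y : A | ∃ p ≤ n, ∃ a' ∈ 𝒜 p, ∃ b' : A, y = a' * e * b'} with hK
  have hab : a * e * b =
      ∑ p ∈ DFinsupp.support (DirectSum.decompose 𝒜 a),
        ∑ q ∈ DFinsupp.support (DirectSum.decompose 𝒜 b),
          projL 𝒜 p a * e * projL 𝒜 q b := by
    conv_lhs => rw [← sum_support_projL 𝒜 a, ← sum_support_projL 𝒜 b]
    rw [Finset.sum_mul, Finset.sum_mul]
    congr 1; ext p
    rw [Finset.mul_sum]
  rw [hab, map_sum]
  refine Submodule.sum_mem K ?_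
  intro p _
  rw [map_sum]
  refine Submodule.sum_mem K ?_
  intro q _
  have hmem : projL 𝒜 p a * e * projL 𝒜 q b ∈ 𝒜 (p + q) := by
    have h1 : projL 𝒜 p a * e ∈ 𝒜 p := by
      simpa using SetLike.mul_mem_graded (projL_mem 𝒜 p a) he0
    exact SetLike.mul_mem_graded h1 (projL_mem 𝒜 q b)
  rcases eq_or_ne (p + q) n with rfl | hpq
  · rw [projL_of_mem_same 𝒜 hmem]
    refine Submodule.subset_span ?_
    exact ⟨p, by omega, projL 𝒜 p a, projL_mem 𝒜 p a, projL 𝒜 q b, rfl⟩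
  · rw [projL_of_mem_ne 𝒜 hmem hpq]
    exact K.zero_mem

lemma projL_gen_mem_left {e : A} (he0 : e ∈ 𝒜 0) (n : ℕ) (a b : A) :
    projL 𝒜 n (a * e * b) ∈
      Submodule.span ℂ {y : A | ∃ q ≤ n, ∃ b' ∈ 𝒜 q, ∃ a' : A, y = a' * e * b'} := by
  set K := Submodule.span ℂ {y : A | ∃ q ≤ n, ∃ b' ∈ 𝒜 q, ∃ a' : A, y = a' * e * b'} with hK
  have hab : a * e * b =
      ∑ p ∈ DFinsupp.support (DirectSum.decompose 𝒜 a),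
        ∑ q ∈ DFinsupp.support (DirectSum.decompose 𝒜 b),
          projL 𝒜 p a * e * projL 𝒜 q b := by
    conv_lhs => rw [← sum_support_projL 𝒜 a, ← sum_support_projL 𝒜 b]
    rw [Finset.sum_mul, Finset.sum_mul]
    congr 1; ext p
    rw [Finset.mul_sum]
  rw [hab, map_sum]
  refine Submodule.sum_mem K ?_
  intro p _
  rw [map_sum]
  refine Submodule.sum_mem K ?_
  intro q _
  have hmem : projL 𝒜 p a * e * projL 𝒜 q b ∈ 𝒜 (p + q) := by
    have h1 : projL 𝒜 p a * e ∈ 𝒜 p := by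
      simpa using SetLike.mul_mem_graded (projL_mem 𝒜 p a) he0
    exact SetLike.mul_mem_graded h1 (projL_mem 𝒜 q b)
  rcases eq_or_ne (p + q) n with rfl | hpq
  · rw [projL_of_mem_same 𝒜 hmem]
    refine Submodule.subset_span ?_
    exact ⟨q, by omega, projL 𝒜 q b, projL_mem 𝒜 q b, projL 𝒜 p a, rfl⟩
  · rw [projL_of_mem_ne 𝒜 hmem hpq]
    exact K.zero_mem

lemma projL_mul_e {e : A} (he0 : e ∈ 𝒜 0) (n : ℕ) (z : A) :
    projL 𝒜 n (z * e) = projL 𝒜 n z * e := by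
  conv_lhs => rw [← sum_support_projL 𝒜 z]
  rw [Finset.sum_mul, map_sum]
  have hterm : ∀ k, projL 𝒜 n (projL 𝒜 k z * e) =
      if k = n then projL 𝒜 k z * e else 0 := by
    intro k
    have hmem : projL 𝒜 k z * e ∈ 𝒜 k := by
      simpa using SetLike.mul_mem_graded (projL_mem 𝒜 k z) he0
    rcases eq_or_ne k n with rfl | hk
    · rw [projL_of_mem_same 𝒜 hmem, if_pos rfl]
    · rw [projL_of_mem_ne 𝒜 hmem hk, if_neg hk]
  have hsum : ∑ k ∈ DFinsupp.support (DirectSum.decompose 𝒜 z),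
      projL 𝒜 n (projL 𝒜 k z * e) =
      ∑ k ∈ DFinsupp.support (DirectSum.decompose 𝒜 z),
      if k = n then projL 𝒜 k z * e else 0 :=
    Finset.sum_congr rfl fun k _ => hterm k
  rw [hsum, Finset.sum_ite_eq' _ n _]
  by_cases hn : n ∈ DFinsupp.support (DirectSum.decompose 𝒜 z)
  · rw [if_pos hn]
  · rw [if_neg hn]
    have hz : projL 𝒜 n z = 0 := by
      have := DFinsupp.notMem_support_iff.mp hn
      simp only [projL, LinearMap.coe_mk, AddHom.coe_mk]
      rw [this]; rfl
    rw [hz, zero_mul]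

lemma projL_e_mul {e : A} (he0 : e ∈ 𝒜 0) (n : ℕ) (z : A) :
    projL 𝒜 n (e * z) = e * projL 𝒜 n z := by
  conv_lhs => rw [← sum_support_projL 𝒜 z]
  rw [Finset.mul_sum, map_sum]
  have hterm : ∀ k, projL 𝒜 n (e * projL 𝒜 k z) =
      if k = n then e * projL 𝒜 k z else 0 := by
    intro k
    have hmem : e * projL 𝒜 k z ∈ 𝒜 k := by
      simpa using SetLike.mul_mem_graded he0 (projL_mem 𝒜 k z)
    rcases eq_or_ne k n with rfl | hk
    · rw [projL_of_mem_same 𝒜 hmem, if_pos rfl]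
    · rw [projL_of_mem_ne 𝒜 hmem hk, if_neg hk]
  have hsum : ∑ k ∈ DFinsupp.support (DirectSum.decompose 𝒜 z),
      projL 𝒜 n (e * projL 𝒜 k z) =
      ∑ k ∈ DFinsupp.support (DirectSum.decompose 𝒜 z),
      if k = n then e * projL 𝒜 k z else 0 :=
    Finset.sum_congr rfl fun k _ => hterm k
  rw [hsum, Finset.sum_ite_eq' _ n _]
  by_cases hn : n ∈ DFinsupp.support (DirectSum.decompose 𝒜 z)
  · rw [if_pos hn]
  · rw [if_neg hn]
    have hz : projL 𝒜 n z = 0 := by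
      have := DFinsupp.notMem_support_iff.mp hn
      simp only [projL, LinearMap.coe_mk, AddHom.coe_mk]
      rw [this]; rfl
    rw [hz, mul_zero]

lemma exists_degree_bound (I : Submodule ℂ A)
    (hgr : ∀ n, ∀ z ∈ I, projL 𝒜 n z ∈ I)
    (hquot : FiniteDimensional ℂ (A ⧸ I)) :
    ∃ N : ℕ, ∀ d, N < d → 𝒜 d ≤ I := by
  have hnoeth : IsNoetherian ℂ (A ⧸ I) := inferInstance
  set f : ℕ →o Submodule ℂ (A ⧸ I) :=
    ⟨fun n => ⨆ k, ⨆ _ : k ≤ n, Submodule.map I.mkQ (𝒜 k),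
     fun a b hab => by
        exact iSup_mono fun k => iSup_mono' fun hk => ⟨hk.trans hab, le_rfl⟩⟩ with hf
  obtain ⟨N, hN⟩ := monotone_stabilizes_iff_noetherian.mpr hnoeth f
  refine ⟨N, fun d hd x hx => ?_⟩
  have h1 : I.mkQ x ∈ f d := by
    have hmem : I.mkQ x ∈ Submodule.map I.mkQ (𝒜 d) := Submodule.mem_map_of_mem hx
    have hle : Submodule.map I.mkQ (𝒜 d) ≤ f d := by
      simp only [hf, OrderHom.coe_mk]
      exact le_iSup₂ (f := fun k (_ : k ≤ d) => Submodule.map I.mkQ (𝒜 k)) d le_rfl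
    exact hle hmem
  rw [← hN d (le_of_lt hd)] at h1
  set W : Submodule ℂ A := ⨆ k, ⨆ _ : k ≤ N, 𝒜 k with hW
  have hfN : f N = Submodule.map I.mkQ W := by
    simp only [hf, OrderHom.coe_mk, hW, Submodule.map_iSup]
    rfl
  rw [hfN] at h1
  have hx' : x ∈ W ⊔ I := by
    have hcm : x ∈ Submodule.comap I.mkQ (Submodule.map I.mkQ W) := h1
    rwa [Submodule.comap_map_eq, Submodule.ker_mkQ] at hcm
  rcases Submodule.mem_sup.mp hx' with ⟨w, hw, i, hi, hwi⟩
  have hpw : projL 𝒜 d w = 0 := by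
    refine Submodule.iSup_induction (motive := fun z => projL 𝒜 d z = 0)
      (fun k => ⨆ _ : k ≤ N, 𝒜 k) hw ?_ (map_zero _) ?_
    · intro k z hz
      by_cases hk : k ≤ N
      · have hik : (⨆ _ : k ≤ N, 𝒜 k) = 𝒜 k := iSup_pos hk
        have hz' : z ∈ 𝒜 k := by
          have hz2 : z ∈ (⨆ _ : k ≤ N, 𝒜 k) := hz
          rwa [hik] at hz2
        exact projL_of_mem_ne 𝒜 hz' (by omega)
      · have hik : (⨆ _ : k ≤ N, 𝒜 k) = (⊥ : Submodule ℂ A) := iSup_neg hk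
        have hz2 : z ∈ (⊥ : Submodule ℂ A) := by
          have hz3 : z ∈ (⨆ _ : k ≤ N, 𝒜 k) := hz
          rwa [hik] at hz3
        simp only [Submodule.mem_bot] at hz2
        rw [hz2, map_zero]
    · intro y z hy hz
      rw [map_add, hy, hz, add_zero]
  have hxd : x = projL 𝒜 d x := (projL_of_mem_same 𝒜 hx).symm
  rw [hxd, ← hwi, map_add, hpw, zero_add]
  exact hgr d i hi

lemma le_of_gen (hgen : Algebra.adjoin ℂ ((𝒜 0 : Set A) ∪ (𝒜 1 : Set A)) = ⊤)
    (B : ℕ → Submodule ℂ A)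
    (hB0 : B 0 = 𝒜 0) (hB1 : 𝒜 1 ≤ B 1)
    (hBle : ∀ n, B n ≤ 𝒜 n) (hBmul : ∀ m n, B m * B n ≤ B (m+n)) (n : ℕ) :
    𝒜 n ≤ B n := by
  intro x hx
  have hclos : ∀ w ∈ Submonoid.closure ((𝒜 0 : Set A) ∪ (𝒜 1 : Set A)), ∃ m, w ∈ B m := by
    intro w hw
    induction hw using Submonoid.closure_induction with
    | mem w hw =>
      rcases hw with h | h
      · exact ⟨0, hB0 ▸ h⟩
      · exact ⟨1, hB1 h⟩
    | one => exact ⟨0, hB0 ▸ SetLike.one_mem_graded 𝒜⟩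
    | mul w₁ w₂ _ _ ih₁ ih₂ =>
      obtain ⟨m₁, h₁⟩ := ih₁
      obtain ⟨m₂, h₂⟩ := ih₂
      exact ⟨m₁ + m₂, hBmul m₁ m₂ (Submodule.mul_mem_mul h₁ h₂)⟩
  have htop : x ∈ Submodule.span ℂ
      ((Submonoid.closure ((𝒜 0 : Set A) ∪ (𝒜 1 : Set A)) : Submonoid A) : Set A) := by
    rw [← Algebra.adjoin_eq_span, hgen]
    exact Submodule.mem_top
  have key : projL 𝒜 n x ∈ B n := by
    clear hx
    induction htop using Submodule.span_induction with
    | mem w hw =>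
      obtain ⟨m, hm⟩ := hclos w hw
      rcases eq_or_ne m n with rfl | hmn
      · rwa [projL_of_mem_same 𝒜 (hBle m hm)]
      · rw [projL_of_mem_ne 𝒜 (hBle m hm) hmn]; exact (B n).zero_mem
    | zero => rw [map_zero]; exact (B n).zero_mem
    | add y z _ _ ihy ihz => rw [map_add]; exact (B n).add_mem ihy ihz
    | smul r y _ ihy => rw [map_smul]; exact (B n).smul_mem r ihy
  rwa [projL_of_mem_same 𝒜 hx] at key



/-- Under the same hypotheses as Statement 7, `Ae` is finitely generated
as a right module over the corner algebra `eAe`, and symmetrically `eA` is finitely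
generated as a left `eAe`-module. -/
theorem stmt8 {A : Type} [Ring A] [Algebra ℂ A]
    (𝒜 : ℕ → Submodule ℂ A) [GradedRing 𝒜]
    {Q₀ : Type} [Fintype Q₀] (eI : Q₀ → A)
    (h0 : ∀ i, eI i ∈ 𝒜 0)
    (hidem : ∀ i, eI i * eI i = eI i)
    (horth : ∀ i j, i ≠ j → eI i * eI j = 0)
    (hsum : ∑ i : Q₀, eI i = 1)
    (hA0 : 𝒜 0 = Submodule.span ℂ (Set.range eI))
    (hfin1 : FiniteDimensional ℂ (𝒜 1))
    (hgen : Algebra.adjoin ℂ ((𝒜 0 : Set A) ∪ (𝒜 1 : Set A)) = ⊤)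
    (H : Finset Q₀) (e : A) (he : e = ∑ i ∈ H, eI i)
    (hquot : FiniteDimensional ℂ
      (A ⧸ Submodule.span ℂ {x : A | ∃ a b : A, x = a * e * b})) :
    (∃ T : Finset A, (↑T : Set A) ⊆ {x : A | x * e = x} ∧
      ∀ x : A, x * e = x →
        x ∈ Submodule.span ℂ
          ((T : Set A) ∪ {y : A | ∃ t ∈ T, ∃ c : A, e * c * e = c ∧ y = t * c})) ∧
    (∃ T' : Finset A, (↑T' : Set A) ⊆ {x : A | e * x = x} ∧
      ∀ x : A, e * x = x →
        x ∈ Submodule.span ℂ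
          ((T' : Set A) ∪ {y : A | ∃ t ∈ T', ∃ c : A, e * c * e = c ∧ y = c * t})) := by
  classical
  -- basic identities
  have hee : e * e = e := by
    rw [he, Finset.sum_mul_sum]
    refine Finset.sum_congr rfl fun i hi => ?_
    rw [Finset.sum_eq_single_of_mem i hi (fun j _ hj => horth i j (Ne.symm hj))]
    exact hidem i
  have h2 : ∀ x : A, e * (e * x) = e * x := fun x => by rw [← mul_assoc, hee]
  have he0 : e ∈ 𝒜 0 := by
    rw [he]; exact Submodule.sum_mem _ (fun i _ => h0 i)
  set I := Submodule.span ℂ {x : A | ∃ a b : A, x = a * e * b} with hI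
  -- corner multiplicativity
  have hcorner : ∀ c c' : A, e * c * e = c → e * c' * e = c' → e * (c * c') * e = c * c' := by
    intro c c' hc hc'
    rw [← hc, ← hc']
    simp only [mul_assoc, hee, h2]
  -- I is a graded submodule
  have hIgr : ∀ n, ∀ z ∈ I, projL 𝒜 n z ∈ I := by
    intro n z hz
    have hmap : projL 𝒜 n z ∈ Submodule.map (projL 𝒜 n) I := Submodule.mem_map_of_mem hz
    rw [hI, Submodule.map_span] at hmap
    refine Submodule.span_le.mpr ?_ hmap
    rintro y ⟨w, ⟨a, b, rfl⟩, rfl⟩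
    have hy := projL_gen_mem_right 𝒜 he0 n a b
    refine Submodule.span_le.mpr ?_ hy
    rintro y' ⟨p, _, a', _, b', rfl⟩
    exact Submodule.subset_span ⟨a', b', rfl⟩
  obtain ⟨N, hN⟩ := exists_degree_bound 𝒜 I hIgr hquot
  -- the graded pieces coincide with the iterated products
  have hABp : ∀ n, 𝒜 n ≤ Bp 𝒜 n := by
    refine le_of_gen 𝒜 hgen (Bp 𝒜) (Bp_zero 𝒜) ?_ (Bp_le 𝒜) (Bp_mul_Bp 𝒜)
    intro v hv
    rw [Bp_succ, Bp_zero]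
    simpa using Submodule.mul_mem_mul (SetLike.one_mem_graded 𝒜) hv
  have hABq : ∀ n, 𝒜 n ≤ Bq 𝒜 n := by
    refine le_of_gen 𝒜 hgen (Bq 𝒜) (Bq_zero 𝒜) ?_ (Bq_le 𝒜) ?_
    · intro v hv
      rw [Bq_succ, Bq_zero]
      simpa using Submodule.mul_mem_mul hv (SetLike.one_mem_graded 𝒜)
    · intro m n
      exact Bq_mul_Bq 𝒜 n m
  -- finite generation of the graded pieces
  have hfg : ∀ n, (𝒜 n).FG := by
    have h0fg : (𝒜 0).FG := by
      rw [hA0]; exact Submodule.fg_span (Set.finite_range eI)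
    have h1fg : (𝒜 1).FG := (Submodule.fg_iff_finiteDimensional _).mpr hfin1
    have hBpfg : ∀ n, (Bp 𝒜 n).FG := by
      intro n
      induction n with
      | zero => rw [Bp_zero]; exact h0fg
      | succ n ih => rw [Bp_succ]; exact Submodule.FG.mul ih h1fg
    intro n
    have : 𝒜 n = Bp 𝒜 n := le_antisymm (hABp n) (Bp_le 𝒜 n)
    rw [this]; exact hBpfg n
  -- a finite-dimensional space covering degrees ≤ N+1
  set U : Submodule ℂ A := ⨆ k : Fin (N+2), 𝒜 k with hU
  have hUfg : U.FG := Submodule.fg_iSup _ (fun k => hfg k)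
  have hUle : ∀ d, d ≤ N + 1 → 𝒜 d ≤ U := by
    intro d hd
    exact le_iSup (fun k : Fin (N+2) => 𝒜 (k : ℕ)) ⟨d, by omega⟩
  obtain ⟨S, hS⟩ := hUfg
  constructor
  -- ══════════ right module part ══════════
  · set T : Finset A := S.image (fun s => s * e) with hT
    set P := Submodule.span ℂ
      ((T : Set A) ∪ {y : A | ∃ t ∈ T, ∃ c : A, e * c * e = c ∧ y = t * c}) with hP
    have hUe : ∀ u ∈ U, u * e ∈ P := by
      intro u hu
      have h1 : u * e ∈ Submodule.map (LinearMap.mulRight ℂ e) (Submodule.span ℂ (S : Set A)) := by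
        rw [hS]
        exact Submodule.mem_map_of_mem hu
      rw [Submodule.map_span] at h1
      have himg : ⇑(LinearMap.mulRight ℂ e) '' (S : Set A) = (T : Set A) := by
        rw [hT, Finset.coe_image]
        rfl
      rw [himg] at h1
      exact Submodule.span_mono Set.subset_union_left h1
    have hPc : ∀ z ∈ P, ∀ c : A, e * c * e = c → z * c ∈ P := by
      intro z hz c hc
      induction hz using Submodule.span_induction with
      | mem y hy =>
        rcases hy with hy | ⟨t, ht, c', hc', rfl⟩
        · exact Submodule.subset_span (Or.inr ⟨y, hy, c, hc, rfl⟩)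
        · rw [mul_assoc]
          exact Submodule.subset_span (Or.inr ⟨t, ht, c' * c, hcorner c' c hc' hc, rfl⟩)
      | zero => rw [zero_mul]; exact P.zero_mem
      | add y w _ _ ihy ihw => rw [add_mul]; exact P.add_mem ihy ihw
      | smul r y _ ihy => rw [smul_mul_assoc]; exact P.smul_mem r ihy
    have main : ∀ d : ℕ, ∀ x ∈ 𝒜 d, x * e = x → x ∈ P := by
      intro d
      induction d using Nat.strong_induction_on with
      | _ d IH =>
        intro x hx hxe
        by_cases hd : d ≤ N + 1
        · rw [← hxe]
          exact hUe x (hUle d hd hx)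
        · push_neg at hd
          have hd1 : d - 1 + 1 = d := by omega
          have hmul : x ∈ Bp 𝒜 (d-1) * 𝒜 1 := by
            have h3 : x ∈ Bp 𝒜 d := hABp d hx
            rw [← hd1, Bp_succ] at h3
            exact h3
          rw [← hxe]
          refine Submodule.mul_induction_on (C := fun z => z * e ∈ P) hmul ?_ ?_
          · intro u hu v hv
            have hu' : u ∈ 𝒜 (d-1) := Bp_le 𝒜 (d-1) hu
            have huI : u ∈ I := hN (d-1) (by omega) hu'
            have huK : u ∈ Submodule.span ℂ
                {y : A | ∃ p ≤ d-1, ∃ a' ∈ 𝒜 p, ∃ b' : A, y = a' * e * b'} := by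
              have hmap : projL 𝒜 (d-1) u ∈ Submodule.map (projL 𝒜 (d-1)) I :=
                Submodule.mem_map_of_mem huI
              rw [projL_of_mem_same 𝒜 hu'] at hmap
              rw [hI, Submodule.map_span] at hmap
              refine Submodule.span_le.mpr ?_ hmap
              rintro y ⟨w, ⟨a, b, rfl⟩, rfl⟩
              exact projL_gen_mem_right 𝒜 he0 (d-1) a b
            clear hu hu' huI hxe hx hmul
            induction huK using Submodule.span_induction with
            | mem y hy =>
              rcases hy with ⟨p, hp, a, ha, b, rfl⟩
              have heq : a * e * b * v * e = (a * e) * (e * (b * v) * e) := by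
                simp only [mul_assoc, hee, h2]
              have hae : a * e ∈ 𝒜 p := by
                simpa using SetLike.mul_mem_graded ha he0
              have haee : (a * e) * e = a * e := by rw [mul_assoc, hee]
              have haP : a * e ∈ P := IH p (by omega) (a * e) hae haee
              have hc : e * (e * (b * v) * e) * e = e * (b * v) * e := by
                simp only [mul_assoc, hee, h2]
              rw [heq]
              exact hPc _ haP _ hc
            | zero => rw [zero_mul, zero_mul]; exact P.zero_mem
            | add y w _ _ ihy ihw =>
              rw [add_mul, add_mul]; exact P.add_mem ihy ihw
            | smul r y _ ihy =>
              rw [smul_mul_assoc, smul_mul_assoc]; exact P.smul_mem r ihy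
          · intro y z ihy ihz
            rw [add_mul]
            exact P.add_mem ihy ihz
    refine ⟨T, ?_, ?_⟩
    · intro t ht
      simp only [hT, Finset.coe_image, Set.mem_image, Finset.mem_coe] at ht
      obtain ⟨s, _, rfl⟩ := ht
      simp only [Set.mem_setOf_eq]
      rw [mul_assoc, hee]
    · intro x hxe
      rw [← sum_support_projL 𝒜 x]
      refine Submodule.sum_mem _ ?_
      intro k _
      refine main k (projL 𝒜 k x) (projL_mem 𝒜 k x) ?_
      rw [← projL_mul_e 𝒜 he0 k x, hxe]
  -- ══════════ left module part ══════════
  · set T : Finset A := S.image (fun s => e * s) with hT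
    set P := Submodule.span ℂ
      ((T : Set A) ∪ {y : A | ∃ t ∈ T, ∃ c : A, e * c * e = c ∧ y = c * t}) with hP
    have hUe : ∀ u ∈ U, e * u ∈ P := by
      intro u hu
      have h1 : e * u ∈ Submodule.map (LinearMap.mulLeft ℂ e) (Submodule.span ℂ (S : Set A)) := by
        rw [hS]
        exact Submodule.mem_map_of_mem hu
      rw [Submodule.map_span] at h1
      have himg : ⇑(LinearMap.mulLeft ℂ e) '' (S : Set A) = (T : Set A) := by
        rw [hT, Finset.coe_image]
        rfl
      rw [himg] at h1
      exact Submodule.span_mono Set.subset_union_left h1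
    have hPc : ∀ z ∈ P, ∀ c : A, e * c * e = c → c * z ∈ P := by
      intro z hz c hc
      induction hz using Submodule.span_induction with
      | mem y hy =>
        rcases hy with hy | ⟨t, ht, c', hc', rfl⟩
        · exact Submodule.subset_span (Or.inr ⟨y, hy, c, hc, rfl⟩)
        · rw [← mul_assoc]
          exact Submodule.subset_span (Or.inr ⟨t, ht, c * c', hcorner c c' hc hc', rfl⟩)
      | zero => rw [mul_zero]; exact P.zero_mem
      | add y w _ _ ihy ihw => rw [mul_add]; exact P.add_mem ihy ihw
      | smul r y _ ihy => rw [mul_smul_comm]; exact P.smul_mem r ihy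
    have main : ∀ d : ℕ, ∀ x ∈ 𝒜 d, e * x = x → x ∈ P := by
      intro d
      induction d using Nat.strong_induction_on with
      | _ d IH =>
        intro x hx hxe
        by_cases hd : d ≤ N + 1
        · rw [← hxe]
          exact hUe x (hUle d hd hx)
        · push_neg at hd
          have hd1 : d - 1 + 1 = d := by omega
          have hmul : x ∈ 𝒜 1 * Bq 𝒜 (d-1) := by
            have h3 : x ∈ Bq 𝒜 d := hABq d hx
            rw [← hd1, Bq_succ] at h3
            exact h3
          rw [← hxe]
          refine Submodule.mul_induction_on (C := fun z => e * z ∈ P) hmul ?_ ?_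
          · intro v hv u hu
            have hu' : u ∈ 𝒜 (d-1) := Bq_le 𝒜 (d-1) hu
            have huI : u ∈ I := hN (d-1) (by omega) hu'
            have huK : u ∈ Submodule.span ℂ
                {y : A | ∃ q ≤ d-1, ∃ b' ∈ 𝒜 q, ∃ a' : A, y = a' * e * b'} := by
              have hmap : projL 𝒜 (d-1) u ∈ Submodule.map (projL 𝒜 (d-1)) I :=
                Submodule.mem_map_of_mem huI
              rw [projL_of_mem_same 𝒜 hu'] at hmap
              rw [hI, Submodule.map_span] at hmap
              refine Submodule.span_le.mpr ?_ hmap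
              rintro y ⟨w, ⟨a, b, rfl⟩, rfl⟩
              exact projL_gen_mem_left 𝒜 he0 (d-1) a b
            clear hu hu' huI hxe hx hmul
            induction huK using Submodule.span_induction with
            | mem y hy =>
              rcases hy with ⟨q, hq, b, hb, a, rfl⟩
              have heq : e * (v * (a * e * b)) = (e * (v * a) * e) * (e * b) := by
                simp only [mul_assoc, hee, h2]
              have heb : e * b ∈ 𝒜 q := by
                simpa using SetLike.mul_mem_graded he0 hb
              have hebe : e * (e * b) = e * b := h2 b
              have hbP : e * b ∈ P := IH q (by omega) (e * b) heb hebe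
              have hc : e * (e * (v * a) * e) * e = e * (v * a) * e := by
                simp only [mul_assoc, hee, h2]
              rw [heq]
              exact hPc _ hbP _ hc
            | zero => rw [mul_zero, mul_zero]; exact P.zero_mem
            | add y w _ _ ihy ihw =>
              rw [mul_add, mul_add]; exact P.add_mem ihy ihw
            | smul r y _ ihy =>
              rw [mul_smul_comm, mul_smul_comm]; exact P.smul_mem r ihy
          · intro y z ihy ihz
            rw [mul_add]
            exact P.add_mem ihy ihz
    refine ⟨T, ?_, ?_⟩
    · intro t ht
      simp only [hT, Finset.coe_image, Set.mem_image, Finset.mem_coe] at ht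
      obtain ⟨s, _, rfl⟩ := ht
      simp only [Set.mem_setOf_eq]
      exact h2 s
    · intro x hxe
      rw [← sum_support_projL 𝒜 x]
      refine Submodule.sum_mem _ ?_
      intro k _
      refine main k (projL 𝒜 k x) (projL_mem 𝒜 k x) ?_
      rw [← projL_e_mul 𝒜 he0 k x, hxe]


end Stmt8
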